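/- Lemma B.5 of the paper: Let (X_i)_{i≥1} be a sequence of real random variables adapted to a filtration 𝓕₀ ⊆ 𝓕₁ ⊆ ⋯, with 0 ≤ X_i ≤ B almost surely for every i, for a fixed constant B > 0. Then for every δ ∈ (0,1), with probability at least 1 − δ, simultaneously for all n ≥ 1: Σ_{i=1}^n E[X_i | 𝓕_{i−1}] ≤ 2·Σ_{i=1}^n X_i + 4B·ln(2n/δ). -/

import Mathlib

open MeasureTheory Finset

private lemma exp_neg_log_two_aux {B y : ℝ} (hB : 0 < B) (hy : y ∈ Set.Icc (0:ℝ) B) :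
    Real.exp (-(Real.log 2 / B) * y) ≤ 1 - (2 * B)⁻¹ * y := by
  obtain ⟨hy0, hyB⟩ := hy
  set t : ℝ := y / B with ht
  have ht0 : 0 ≤ t := div_nonneg hy0 hB.le
  have ht1 : t ≤ 1 := (div_le_one hB).2 hyB
  have hconv := convexOn_exp.2 (Set.mem_univ (0:ℝ)) (Set.mem_univ (-Real.log 2))
      (by linarith : (0:ℝ) ≤ 1 - t) ht0 (by ring)
  have h2 : Real.exp (-Real.log 2) = 1/2 := by
    rw [Real.exp_neg, Real.exp_log (by norm_num : (0:ℝ) < 2)]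
    norm_num
  have harg : (1 - t) • (0:ℝ) + t • (-Real.log 2) = -(Real.log 2 / B) * y := by
    simp only [smul_eq_mul, ht]
    field_simp
    ring
  have hrhs : (1 - t) • Real.exp 0 + t • Real.exp (-Real.log 2) = 1 - (2*B)⁻¹ * y := by
    rw [Real.exp_zero, h2]
    simp only [smul_eq_mul, ht]
    field_simp
    ring
  rw [← harg, ← hrhs]
  exact hconv

/-- Lemma B.5: for an adapted sequence `(X_i)` with `0 ≤ X_i ≤ B` a.s., with probability at
least `1 - δ`, simultaneously for all `n ≥ 1`,
`∑_{i=1}^n E[X_i | 𝓕_{i-1}] ≤ 2 ∑_{i=1}^n X_i + 4 B ln(2n/δ)`. -/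
theorem e2r_inequality
    {Ω : Type*} {m0 : MeasurableSpace Ω} {μ : Measure Ω} [IsProbabilityMeasure μ]
    (ℱ : Filtration ℕ m0) (X : ℕ → Ω → ℝ) (B : ℝ) (hB : 0 < B)
    (hadapted : ∀ i, 1 ≤ i → StronglyMeasurable[ℱ i] (X i))
    (hbound : ∀ i, 1 ≤ i → ∀ᵐ ω ∂μ, X i ω ∈ Set.Icc (0 : ℝ) B)
    (δ : ℝ) (hδ0 : 0 < δ) (hδ1 : δ < 1) :
    ENNReal.ofReal (1 - δ) ≤
      μ {ω | ∀ n : ℕ, 1 ≤ n →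
        ∑ i ∈ Finset.Icc 1 n, (μ[X i | ℱ (i - 1)]) ω ≤
          2 * ∑ i ∈ Finset.Icc 1 n, X i ω + 4 * B * Real.log (2 * n / δ)} := by
  have hlog2_pos : 0 < Real.log 2 := Real.log_pos one_lt_two
  have hlog2_lt : Real.log 2 < 1 := by
    have := Real.log_two_lt_d9; linarith
  have hlog2_half : (1:ℝ)/2 ≤ Real.log 2 := by
    have := Real.log_two_gt_d9; linarith
  have hXm : ∀ i, 1 ≤ i → StronglyMeasurable (X i) := fun i hi => (hadapted i hi).mono (ℱ.le i)
  have hXint : ∀ i, 1 ≤ i → Integrable (X i) μ := by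
    intro i hi
    refine Integrable.mono' (integrable_const B) (hXm i hi).aestronglyMeasurable ?_
    filter_upwards [hbound i hi] with ω hω
    rw [Real.norm_eq_abs, abs_le]
    exact ⟨by linarith [hω.1], hω.2⟩
  have hCEbdd : ∀ i, 1 ≤ i → ∀ᵐ ω ∂μ, (μ[X i | ℱ (i-1)]) ω ∈ Set.Icc (0:ℝ) B := by
    intro i hi
    have h0 : (0:Ω → ℝ) ≤ᵐ[μ] μ[X i | ℱ (i-1)] :=
      condExp_nonneg (by filter_upwards [hbound i hi] with ω hω using hω.1)
    have hub : μ[X i | ℱ (i-1)] ≤ᵐ[μ] μ[(fun _ => B) | ℱ (i-1)] :=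
      condExp_mono (hXint i hi) (integrable_const B)
        (by filter_upwards [hbound i hi] with ω hω using hω.2)
    rw [condExp_const (ℱ.le _)] at hub
    filter_upwards [h0, hub] with ω h1 h2
    exact ⟨h1, h2⟩
  set L : ℝ := Real.log 2 with hL
  set g : ℕ → Ω → ℝ :=
    fun i ω => Real.exp ((2*B)⁻¹ * (μ[X i | ℱ (i-1)]) ω - L/B * X i ω) with hgdef
  set W : ℕ → Ω → ℝ := fun n ω => ∏ i ∈ Finset.Icc 1 n, g i ω with hWdef
  have hWpos : ∀ n ω, 0 ≤ W n ω := fun n ω => Finset.prod_nonneg fun i _ => (Real.exp_pos _).le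
  have hgm : ∀ i n, 1 ≤ i → i ≤ n → StronglyMeasurable[ℱ n] (g i) := by
    intro i n h1 h2
    have hce : Measurable[ℱ n] (μ[X i | ℱ (i-1)]) :=
      (stronglyMeasurable_condExp.mono (ℱ.mono (by omega))).measurable
    have hx : Measurable[ℱ n] (X i) := ((hadapted i h1).mono (ℱ.mono h2)).measurable
    exact (Real.measurable_exp.comp ((hce.const_mul _).sub (hx.const_mul _))).stronglyMeasurable
  have hWm : ∀ n, StronglyMeasurable[ℱ n] (W n) := by
    intro n
    apply Finset.stronglyMeasurable_fun_prod
    intro i hi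
    rw [Finset.mem_Icc] at hi
    exact hgm i n hi.1 hi.2
  have hgbdd : ∀ i, 1 ≤ i → ∀ᵐ ω ∂μ, g i ω ≤ 2 := by
    intro i hi
    filter_upwards [hbound i hi, hCEbdd i hi] with ω h1 h2
    have e1 : (2*B)⁻¹ * (μ[X i | ℱ (i-1)]) ω ≤ (2*B)⁻¹ * B :=
      mul_le_mul_of_nonneg_left h2.2 (by positivity)
    have e1' : (2*B)⁻¹ * B = 1/2 := by field_simp
    have e2 : 0 ≤ L/B * X i ω := mul_nonneg (div_nonneg hlog2_pos.le hB.le) h1.1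
    have hexp : (2*B)⁻¹ * (μ[X i | ℱ (i-1)]) ω - L/B * X i ω ≤ L := by
      rw [hL]; linarith
    calc g i ω ≤ Real.exp L := Real.exp_le_exp.2 hexp
    _ = 2 := Real.exp_log (by norm_num)
  have hWint : ∀ n, Integrable (W n) μ := by
    intro n
    refine Integrable.mono' (integrable_const ((2:ℝ)^n))
      ((hWm n).mono (ℱ.le n)).aestronglyMeasurable ?_
    have hae : ∀ᵐ ω ∂μ, ∀ i ∈ Finset.Icc 1 n, g i ω ≤ 2 := by
      rw [Filter.eventually_all_finset]
      intro i hi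
      exact hgbdd i (Finset.mem_Icc.1 hi).1
    filter_upwards [hae] with ω hω
    rw [Real.norm_eq_abs, abs_of_nonneg (hWpos n ω)]
    calc W n ω ≤ ∏ _i ∈ Finset.Icc 1 n, (2:ℝ) :=
          Finset.prod_le_prod (fun i _ => (Real.exp_pos _).le) hω
    _ = 2 ^ (Finset.Icc 1 n).card := Finset.prod_const 2
    _ = 2 ^ n := by rw [Nat.card_Icc]; norm_num
  have hsuper : ∀ n, ∫ ω, W n ω ∂μ ≤ 1 := by
    intro n
    induction n with
    | zero => simp [hWdef]
    | succ n ih =>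
      have hn1 : 1 ≤ n + 1 := by omega
      set c : ℝ := (2*B)⁻¹ with hc
      set F : Ω → ℝ := fun ω => W n ω * Real.exp (c * (μ[X (n+1) | ℱ n]) ω) with hF
      set h : Ω → ℝ := fun ω => Real.exp (-(L/B * X (n+1) ω)) with hh
      have hWeq : W (n+1) = F * h := by
        funext ω
        have h1 : W (n+1) ω = W n ω * g (n+1) ω :=
          Finset.prod_Icc_succ_top (Nat.le_add_left 1 n) _
        have h2 : g (n+1) ω
            = Real.exp (c * (μ[X (n+1) | ℱ n]) ω - L/B * X (n+1) ω) := by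
          simp only [hgdef, Nat.add_sub_cancel, hc]
        show W (n+1) ω = F ω * h ω
        rw [h1, h2, sub_eq_add_neg, Real.exp_add, hF, hh, mul_assoc]
      have hFm : StronglyMeasurable[ℱ n] F :=
        (hWm n).mul (Real.measurable_exp.comp
          (stronglyMeasurable_condExp.measurable.const_mul c)).stronglyMeasurable
      have hFh_int : Integrable (F * h) μ := hWeq ▸ hWint (n+1)
      have hh_int : Integrable h μ := by
        refine Integrable.mono' (integrable_const (1:ℝ)) ?_ ?_
        · exact (Real.measurable_exp.comp
            (((hXm (n+1) hn1).measurable.const_mul (L/B)).neg)).aestronglyMeasurable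
        · filter_upwards [hbound (n+1) hn1] with ω hω
          rw [hh, Real.norm_eq_abs, abs_of_pos (Real.exp_pos _), Real.exp_le_one_iff]
          have : 0 ≤ L/B * X (n+1) ω := mul_nonneg (div_nonneg hlog2_pos.le hB.le) hω.1
          linarith
      have hpull := condExp_mul_of_stronglyMeasurable_left (m := ℱ n) hFm hFh_int hh_int
      have hXc_int : Integrable (fun ω => 1 - c * X (n+1) ω) μ :=
        (integrable_const (1:ℝ)).sub ((hXint (n+1) hn1).const_mul c)
      have step1 : μ[h | ℱ n] ≤ᵐ[μ] μ[(fun ω => 1 - c * X (n+1) ω) | ℱ n] := by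
        refine condExp_mono hh_int hXc_int ?_
        filter_upwards [hbound (n+1) hn1] with ω hω
        have h := exp_neg_log_two_aux hB hω
        rw [neg_mul] at h
        rw [hh, hc, hL]
        exact h
      have step2 : μ[(fun ω => 1 - c * X (n+1) ω) | ℱ n]
          =ᵐ[μ] fun ω => 1 - c * (μ[X (n+1) | ℱ n]) ω := by
        have heq : (fun ω => 1 - c * X (n+1) ω) = (fun _ => (1:ℝ)) - c • (X (n+1)) := by
          funext ω; simp [smul_eq_mul]
        rw [heq]
        have h1 := condExp_sub (μ := μ) (m := ℱ n) (integrable_const (1:ℝ))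
          ((hXint (n+1) hn1).smul c)
        have h2 := condExp_smul (μ := μ) (m := ℱ n) c (X (n+1))
        filter_upwards [h1, h2] with ω hω1 hω2
        rw [hω1]
        simp only [Pi.sub_apply, Pi.smul_apply, smul_eq_mul] at *
        rw [hω2, condExp_const (ℱ.le n)]
      have hle : μ[W (n+1) | ℱ n] ≤ᵐ[μ] W n := by
        rw [hWeq]
        filter_upwards [hpull, step1, step2] with ω h1 h2 h3
        rw [h1]
        have hF0 : 0 ≤ F ω := mul_nonneg (hWpos n ω) (Real.exp_pos _).le
        have hmgf : (μ[h | ℱ n]) ω ≤ Real.exp (-(c * (μ[X (n+1) | ℱ n]) ω)) := by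
          have := Real.add_one_le_exp (-(c * (μ[X (n+1) | ℱ n]) ω))
          have h3' : (μ[(fun ω => 1 - c * X (n+1) ω) | ℱ n]) ω
              = 1 - c * (μ[X (n+1) | ℱ n]) ω := h3
          linarith [h2, this]
        calc (F * μ[h | ℱ n]) ω = F ω * (μ[h | ℱ n]) ω := rfl
        _ ≤ F ω * Real.exp (-(c * (μ[X (n+1) | ℱ n]) ω)) :=
            mul_le_mul_of_nonneg_left hmgf hF0
        _ = W n ω := by
            rw [hF]
            show W n ω * Real.exp _ * Real.exp _ = W n ω
            rw [mul_assoc, ← Real.exp_add]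
            simp
      calc ∫ ω, W (n+1) ω ∂μ = ∫ ω, (μ[W (n+1) | ℱ n]) ω ∂μ :=
            (integral_condExp (ℱ.le n)).symm
      _ ≤ ∫ ω, W n ω ∂μ := integral_mono_ae integrable_condExp (hWint n) hle
      _ ≤ 1 := ih
  -- Markov / per-n bad event bound
  have hbad : ∀ n : ℕ, μ {ω | 1 ≤ n ∧
      ¬ (∑ i ∈ Finset.Icc 1 n, (μ[X i | ℱ (i - 1)]) ω ≤
        2 * ∑ i ∈ Finset.Icc 1 n, X i ω + 4 * B * Real.log (2 * n / δ))}
      ≤ ENNReal.ofReal (δ^2/4) * ENNReal.ofReal ((1:ℝ)/(n:ℝ)^2) := by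
    intro n
    rcases Nat.eq_zero_or_pos n with rfl | hn
    · simp
    have hn' : (1:ℝ) ≤ (n:ℝ) := by exact_mod_cast hn
    have h2n : (0:ℝ) < 2 * (n:ℝ) / δ := by positivity
    set ε : ℝ := (2 * (n:ℝ) / δ)^2 with hε
    have hεpos : 0 < ε := by positivity
    have hsub : ∀ᵐ ω ∂μ, ω ∈ {ω | 1 ≤ n ∧
        ¬ (∑ i ∈ Finset.Icc 1 n, (μ[X i | ℱ (i - 1)]) ω ≤
          2 * ∑ i ∈ Finset.Icc 1 n, X i ω + 4 * B * Real.log (2 * n / δ))} →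
        ω ∈ {ω | ε ≤ W n ω} := by
      have hae : ∀ᵐ ω ∂μ, ∀ i ∈ Finset.Icc 1 n,
          (X i ω ∈ Set.Icc (0:ℝ) B ∧ (μ[X i | ℱ (i-1)]) ω ∈ Set.Icc (0:ℝ) B) := by
        rw [Filter.eventually_all_finset]
        intro i hi
        exact (hbound i (Finset.mem_Icc.1 hi).1).and (hCEbdd i (Finset.mem_Icc.1 hi).1)
      filter_upwards [hae] with ω hω hbadω
      obtain ⟨-, hineq⟩ := hbadω
      push_neg at hineq
      have hWexp : W n ω
          = Real.exp (∑ i ∈ Finset.Icc 1 n,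
              ((2*B)⁻¹ * (μ[X i | ℱ (i-1)]) ω - L/B * X i ω)) := (Real.exp_sum _ _).symm
      set S : ℝ := ∑ i ∈ Finset.Icc 1 n, (μ[X i | ℱ (i-1)]) ω with hS
      set T : ℝ := ∑ i ∈ Finset.Icc 1 n, X i ω with hT
      have hT0 : 0 ≤ T := Finset.sum_nonneg fun i hi => (hω i hi).1.1
      set Λ : ℝ := Real.log (2 * (n:ℝ) / δ) with hΛ
      have hineq' : 2 * T + 4 * B * Λ ≤ S := hineq.le
      have hsum_eq : (∑ i ∈ Finset.Icc 1 n,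
          ((2*B)⁻¹ * (μ[X i | ℱ (i-1)]) ω - L/B * X i ω)) = (2*B)⁻¹ * S - L/B * T := by
        rw [Finset.sum_sub_distrib, ← Finset.mul_sum, ← Finset.mul_sum]
      have hexp_ge : 2 * Λ ≤ (2*B)⁻¹ * S - L/B * T := by
        have e1 : (2*B)⁻¹ * (2 * T + 4 * B * Λ) ≤ (2*B)⁻¹ * S :=
          mul_le_mul_of_nonneg_left hineq' (by positivity)
        have e2 : (2*B)⁻¹ * (2 * T + 4 * B * Λ) = T/B + 2*Λ := by
          field_simp
          ring
        have e3 : L/B * T ≤ T/B := by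
          rw [div_mul_eq_mul_div]
          have : L * T ≤ 1 * T := mul_le_mul_of_nonneg_right hlog2_lt.le hT0
          apply div_le_div_of_nonneg_right (by linarith) hB.le
        linarith
      show ε ≤ W n ω
      rw [hWexp, hsum_eq]
      have hεe : ε = Real.exp (2 * Λ) := by
        have : Real.exp (2 * Λ) = (2 * (n:ℝ) / δ)^2 := by
          rw [hΛ, show (2:ℝ) * Real.log (2*(n:ℝ)/δ) = ((2:ℕ):ℝ) * Real.log (2*(n:ℝ)/δ) by norm_num,
            ← Real.log_pow, Real.exp_log (by positivity)]
        rw [hε, this]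
      rw [hεe]
      exact Real.exp_le_exp.2 hexp_ge
    have markov := mul_meas_ge_le_integral_of_nonneg (μ := μ)
      (Filter.Eventually.of_forall (hWpos n)) (hWint n) ε
    have htoReal : (μ {ω | ε ≤ W n ω}).toReal ≤ 1/ε := by
      rw [le_div_iff₀ hεpos]
      calc (μ {ω | ε ≤ W n ω}).toReal * ε = ε * (μ {ω | ε ≤ W n ω}).toReal := mul_comm _ _
      _ ≤ ∫ ω, W n ω ∂μ := markov
      _ ≤ 1 := hsuper n
    calc μ _ ≤ μ {ω | ε ≤ W n ω} := measure_mono_ae hsub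
    _ = ENNReal.ofReal ((μ {ω | ε ≤ W n ω}).toReal) :=
        (ENNReal.ofReal_toReal (measure_ne_top μ _)).symm
    _ ≤ ENNReal.ofReal (1/ε) := ENNReal.ofReal_le_ofReal htoReal
    _ = ENNReal.ofReal (δ^2/4) * ENNReal.ofReal ((1:ℝ)/(n:ℝ)^2) := by
        rw [← ENNReal.ofReal_mul (by positivity)]
        congr 1
        rw [hε]
        field_simp
        ring
  -- union bound and conclusion
  set G := {ω | ∀ n : ℕ, 1 ≤ n →
    ∑ i ∈ Finset.Icc 1 n, (μ[X i | ℱ (i - 1)]) ω ≤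
      2 * ∑ i ∈ Finset.Icc 1 n, X i ω + 4 * B * Real.log (2 * n / δ)} with hG
  have hcover : Gᶜ ⊆ ⋃ n : ℕ, {ω | 1 ≤ n ∧
      ¬ (∑ i ∈ Finset.Icc 1 n, (μ[X i | ℱ (i - 1)]) ω ≤
        2 * ∑ i ∈ Finset.Icc 1 n, X i ω + 4 * B * Real.log (2 * n / δ))} := by
    intro ω hω
    simp only [hG, Set.mem_compl_iff, Set.mem_setOf_eq, not_forall] at hω
    obtain ⟨n, hn, hln⟩ := hω
    exact Set.mem_iUnion.2 ⟨n, hn, hln⟩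
  have hGc : μ Gᶜ ≤ ENNReal.ofReal δ := by
    have hpi := Real.pi_le_four
    have hpi0 := Real.pi_pos
    calc μ Gᶜ ≤ ∑' n : ℕ, μ {ω | 1 ≤ n ∧
          ¬ (∑ i ∈ Finset.Icc 1 n, (μ[X i | ℱ (i - 1)]) ω ≤
            2 * ∑ i ∈ Finset.Icc 1 n, X i ω + 4 * B * Real.log (2 * n / δ))} :=
        (measure_mono hcover).trans (measure_iUnion_le _)
    _ ≤ ∑' n : ℕ, ENNReal.ofReal (δ^2/4) * ENNReal.ofReal ((1:ℝ)/(n:ℝ)^2) :=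
        ENNReal.tsum_le_tsum hbad
    _ = ENNReal.ofReal (δ^2/4) * ∑' n : ℕ, ENNReal.ofReal ((1:ℝ)/(n:ℝ)^2) :=
        ENNReal.tsum_mul_left
    _ = ENNReal.ofReal (δ^2/4) * ENNReal.ofReal (Real.pi^2/6) := by
        rw [← ENNReal.ofReal_tsum_of_nonneg (fun n => by positivity)
          hasSum_zeta_two.summable, hasSum_zeta_two.tsum_eq]
    _ ≤ ENNReal.ofReal δ := by
        rw [← ENNReal.ofReal_mul (by positivity)]
        apply ENNReal.ofReal_le_ofReal
        have hp2 : Real.pi^2 ≤ 16 := by nlinarith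
        have hd2 : δ^2 ≤ δ := by nlinarith
        have h3 : δ^2 * Real.pi^2 ≤ δ * 16 := mul_le_mul hd2 hp2 (by positivity) hδ0.le
        linarith
  have h1 : (1:ENNReal) ≤ μ G + μ Gᶜ := by
    calc (1:ENNReal) = μ Set.univ := measure_univ.symm
    _ = μ (G ∪ Gᶜ) := by rw [Set.union_compl_self]
    _ ≤ μ G + μ Gᶜ := measure_union_le _ _
  calc ENNReal.ofReal (1 - δ) = 1 - ENNReal.ofReal δ := by
        rw [ENNReal.ofReal_sub _ hδ0.le, ENNReal.ofReal_one]
  _ ≤ 1 - μ Gᶜ := tsub_le_tsub_left hGc 1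
  _ ≤ μ G := by
        rw [tsub_le_iff_right]
        exact h1
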